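/- Let d ∈ ℕ and j ∈ ℤ. For every θ ∈ [0,1] and all nonnegative functions f, g ∈ L^1(ℝ^d), one has ‖I_j^θ(f,g)‖_{L^{1/2}(ℝ^d)} ≤ 2^{dj} 3^d 5^{2d} ‖f‖_{L^1(ℝ^d)} ‖g‖_{L^1(ℝ^d)}, i.e., (∫_{ℝ^d} I_j^θ(f,g)(x)^{1/2} dx)² ≤ 2^{dj} 3^d 5^{2d} ‖f‖_{L^1} ‖g‖_{L^1}. -/

import Mathlib

open MeasureTheory ENNReal NNReal


/-- The bilinear operator `I_j^θ(f,g)(x) = ∫_{|y| ≤ 2^j} f(x + (θ−1)y) g(x + θy) dy`. -/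
noncomputable def Ij (d : ℕ) (j : ℤ) (θ : ℝ)
    (f g : EuclideanSpace ℝ (Fin d) → ℝ≥0∞) (x : EuclideanSpace ℝ (Fin d)) : ℝ≥0∞ :=
  ∫⁻ y in {y : EuclideanSpace ℝ (Fin d) | ‖y‖ ≤ (2 : ℝ) ^ j},
    f (x + (θ - 1) • y) * g (x + θ • y)

namespace Stmt5Aux

abbrev Ed (d : ℕ) := EuclideanSpace ℝ (Fin d)

variable {d : ℕ}

lemma ind_mul (S : Set (Ed d)) (F : Ed d → ℝ≥0∞) (x : Ed d) :
    S.indicator F x = S.indicator 1 x * F x := by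
  by_cases hx : x ∈ S <;> simp [hx]

lemma abs_coord_le (y : Ed d) (i : Fin d) : |y i| ≤ ‖y‖ := by
  rw [EuclideanSpace.norm_eq]
  calc |y i| = Real.sqrt (‖y i‖ ^ 2) := by rw [Real.sqrt_sq_eq_abs]; simp
  _ ≤ _ := Real.sqrt_le_sqrt (Finset.single_le_sum (f := fun i => ‖y i‖^2)
      (fun i _ => sq_nonneg _) (Finset.mem_univ i))

/-- `box d s a b n` : the set of `x` with coordinates in `[(n i + a) s, (n i + b) s)`. -/
def box (d : ℕ) (s : ℝ) (a b : ℤ) (n : Fin d → ℤ) : Set (EuclideanSpace ℝ (Fin d)) :=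
  {x | ∀ i, ((n i + a : ℤ) : ℝ) * s ≤ x i ∧ x i < ((n i + b : ℤ) : ℝ) * s}

lemma mem_box_shift {s : ℝ} {a b : ℤ} {n : Fin d → ℤ} {x z : Ed d}
    (hx : x ∈ box d s a b n) (h : ∀ i, |z i - x i| ≤ s) : z ∈ box d s (a - 1) (b + 1) n := by
  intro i
  obtain ⟨h1, h2⟩ := hx i
  have h3 := abs_le.1 (h i)
  push_cast at h1 h2 ⊢
  exact ⟨by nlinarith [h3.1, h3.2], by nlinarith [h3.1, h3.2]⟩

lemma box_measurable (s : ℝ) (a b : ℤ) (n : Fin d → ℤ) : MeasurableSet (box d s a b n) := by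
  have : box d s a b n = ((MeasurableEquiv.toLp 2 (Fin d → ℝ)).symm) ⁻¹'
      (Set.univ.pi fun i => Set.Ico (((n i + a : ℤ) : ℝ) * s) (((n i + b : ℤ) : ℝ) * s)) := by
    ext x
    simp [box, Set.mem_pi, Set.mem_Ico]
  rw [this]
  exact ((MeasurableEquiv.toLp 2 (Fin d → ℝ)).symm).measurable
    (MeasurableSet.univ_pi fun i => measurableSet_Ico)

lemma box_volume (s : ℝ) (a b : ℤ) (n : Fin d → ℤ) :
    volume (box d s a b n) = (ENNReal.ofReal (((b - a : ℤ) : ℝ) * s)) ^ d := by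
  have hbe : box d s a b n = ((MeasurableEquiv.toLp 2 (Fin d → ℝ)).symm) ⁻¹'
      (Set.univ.pi fun i => Set.Ico (((n i + a : ℤ) : ℝ) * s) (((n i + b : ℤ) : ℝ) * s)) := by
    ext x
    simp [box, Set.mem_pi, Set.mem_Ico]
  rw [hbe, (EuclideanSpace.volume_preserving_symm_measurableEquiv_toLp (Fin d)).measure_preimage
    ((MeasurableSet.univ_pi fun i => measurableSet_Ico).nullMeasurableSet)]
  rw [volume_pi_pi]
  simp only [Real.volume_Ico]
  have : ∀ i : Fin d, ENNReal.ofReal (((n i + b : ℤ) : ℝ) * s - ((n i + a : ℤ) : ℝ) * s)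
      = ENNReal.ofReal (((b - a : ℤ) : ℝ) * s) := by
    intro i; congr 1; push_cast; ring
  simp only [this, Finset.prod_const, Finset.card_univ, Fintype.card_fin]

lemma mem_box_floor {s : ℝ} (hs : 0 < s) (x : Ed d) :
    x ∈ box d s 0 1 (fun i => ⌊x i / s⌋) := by
  intro i
  constructor
  · push_cast
    have := mul_le_mul_of_nonneg_right (Int.floor_le (x i / s)) hs.le
    rw [div_mul_cancel₀ _ hs.ne'] at this
    linarith
  · push_cast
    have := Int.lt_floor_add_one (x i / s)
    calc x i = (x i / s) * s := by field_simp
    _ < (⌊x i / s⌋ + 1) * s := by exact mul_lt_mul_of_pos_right this hs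

lemma box_eq_floor {s : ℝ} (hs : 0 < s) {n : Fin d → ℤ} {x : Ed d}
    (hx : x ∈ box d s 0 1 n) : n = fun i => ⌊x i / s⌋ := by
  funext i
  obtain ⟨h1, h2⟩ := hx i
  push_cast at h1 h2
  symm
  rw [Int.floor_eq_iff]
  constructor
  · rw [le_div_iff₀ hs]; linarith
  · rw [div_lt_iff₀ hs]; push_cast; linarith

lemma box_cover {s : ℝ} (hs : 0 < s) : (⋃ n : Fin d → ℤ, box d s 0 1 n) = Set.univ := by
  ext x
  simp only [Set.mem_iUnion, Set.mem_univ, iff_true]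
  exact ⟨_, mem_box_floor hs x⟩

lemma box_disjoint {s : ℝ} (hs : 0 < s) :
    Pairwise (Function.onFun Disjoint (fun n : Fin d → ℤ => box d s 0 1 n)) := by
  intro n m hnm
  rw [Function.onFun, Set.disjoint_left]
  intro x hx hx'
  exact hnm ((box_eq_floor hs hx).trans (box_eq_floor hs hx').symm)

lemma box_count {s : ℝ} (hs : 0 < s) (a b : ℤ) (x : Ed d) :
    ∑' n : Fin d → ℤ, (box d s a b n).indicator (fun _ => (1 : ℝ≥0∞)) x
      = (((b - a).toNat : ℝ≥0∞)) ^ d := by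
  set m : Fin d → ℤ := fun i => ⌊x i / s⌋ with hm
  have key : ∀ n : Fin d → ℤ, x ∈ box d s a b n ↔
      n ∈ Fintype.piFinset (fun i => Finset.Ioc (m i - b) (m i - a)) := by
    intro n
    rw [Fintype.mem_piFinset]
    refine forall_congr' fun i => ?_
    rw [Finset.mem_Ioc]
    have e1 : ((n i + a : ℤ) : ℝ) * s ≤ x i ↔ n i + a ≤ m i := by
      rw [hm]
      rw [Int.le_floor, le_div_iff₀ hs]
    have e2 : x i < ((n i + b : ℤ) : ℝ) * s ↔ m i < n i + b := by
      rw [hm]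
      rw [Int.floor_lt, div_lt_iff₀ hs]
    constructor
    · rintro ⟨h1, h2⟩; rw [e1] at h1; rw [e2] at h2; omega
    · rintro ⟨h1, h2⟩; exact ⟨e1.2 (by omega), e2.2 (by omega)⟩
  rw [tsum_eq_sum (s := Fintype.piFinset fun i => Finset.Ioc (m i - b) (m i - a))
    (fun n hn => Set.indicator_of_notMem (fun hx => hn ((key n).1 hx)) _)]
  have : ∀ n ∈ Fintype.piFinset (fun i => Finset.Ioc (m i - b) (m i - a)),
      (box d s a b n).indicator (fun _ => (1 : ℝ≥0∞)) x = 1 := by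
    intro n hn
    exact Set.indicator_of_mem ((key n).2 hn) _
  rw [Finset.sum_congr rfl this, Finset.sum_const, nsmul_eq_mul, mul_one,
    Fintype.card_piFinset]
  simp [Int.card_Ioc]

lemma conj22 : Real.HolderConjugate 2 2 := Real.HolderConjugate.two_two

lemma rpow_half_sq (a : ℝ≥0∞) : (a ^ ((1:ℝ)/2)) ^ (2:ℝ) = a := by
  rw [← ENNReal.rpow_mul]
  norm_num

lemma lintegral_rpow_half_sq {α : Type*} [MeasurableSpace α] (μ : Measure α) (a : α → ℝ≥0∞) :
    (∫⁻ i, (a i ^ ((1:ℝ)/2)) ^ (2:ℝ) ∂μ) = ∫⁻ i, a i ∂μ := by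
  simp only [rpow_half_sq]

lemma tsum_cauchy_schwarz {ι : Type*} [Countable ι] (a b : ι → ℝ≥0∞) :
    ∑' i, (a i) ^ ((1:ℝ)/2) * (b i) ^ ((1:ℝ)/2)
      ≤ (∑' i, a i) ^ ((1:ℝ)/2) * (∑' i, b i) ^ ((1:ℝ)/2) := by
  letI : MeasurableSpace ι := ⊤
  haveI : MeasurableSingletonClass ι := ⟨fun _ => trivial⟩
  rw [← lintegral_count, ← lintegral_count, ← lintegral_count]
  have h := ENNReal.lintegral_mul_le_Lp_mul_Lq (Measure.count (α := ι)) conj22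
    (f := fun i => (a i) ^ ((1:ℝ)/2)) (g := fun i => (b i) ^ ((1:ℝ)/2))
    measurable_from_top.aemeasurable measurable_from_top.aemeasurable
  simp only [Pi.mul_apply] at h
  refine le_trans h ?_
  rw [lintegral_rpow_half_sq, lintegral_rpow_half_sq]

/-- Cauchy-Schwarz on a measure: `∫ h^{1/2} ≤ μ(univ)^{1/2} (∫ h)^{1/2}`. -/
lemma lintegral_rpow_half_le {α : Type*} [MeasurableSpace α] (μ : Measure α)
    (h : α → ℝ≥0∞) (hh : AEMeasurable h μ) :
    ∫⁻ x, (h x) ^ ((1:ℝ)/2) ∂μ ≤ (μ Set.univ) ^ ((1:ℝ)/2) * (∫⁻ x, h x ∂μ) ^ ((1:ℝ)/2) := by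
  have hH := ENNReal.lintegral_mul_le_Lp_mul_Lq μ conj22
    (f := fun x => (h x) ^ ((1:ℝ)/2)) (g := fun _ => 1)
    (hh.pow_const _) aemeasurable_const
  simp only [Pi.mul_apply, mul_one, rpow_half_sq, ENNReal.one_rpow, lintegral_const,
    one_mul] at hH
  refine le_trans hH ?_
  rw [mul_comm]

lemma ofReal_two_zpow (j : ℤ) : ENNReal.ofReal ((2:ℝ)^j) = (2:ℝ≥0∞)^j := by
  have h1 : ((2:ℝ)^j) = (((2:ℝ≥0)^j : ℝ≥0) : ℝ) := by
    rw [NNReal.coe_zpow]; norm_num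
  rw [h1, ENNReal.ofReal_coe_nnreal, ENNReal.coe_zpow (by norm_num : (2:ℝ≥0) ≠ 0)]
  norm_num

lemma two_zpow_pow (d : ℕ) (j : ℤ) : ((2:ℝ≥0∞)^j)^d = (2:ℝ≥0∞)^((d:ℤ)*j) := by
  have h2 : (2:ℝ≥0∞) = ((2:ℝ≥0):ℝ≥0∞) := by norm_cast
  rw [h2, ← ENNReal.coe_zpow (by norm_num : (2:ℝ≥0) ≠ 0) j, ← ENNReal.coe_pow,
    ← zpow_natCast ((2:ℝ≥0)^j) d, ← zpow_mul, mul_comm j (d:ℤ),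
    ENNReal.coe_zpow (by norm_num : (2:ℝ≥0) ≠ 0)]

variable (j : ℤ) (θ : ℝ) (f g : Ed d → ℝ≥0∞)

lemma measurable_Ij (hf : Measurable f) (hg : Measurable g) :
    Measurable (Ij d j θ f g) := by
  apply Measurable.lintegral_prod_right'
    (f := fun p : Ed d × Ed d => f (p.1 + (θ - 1) • p.2) * g (p.1 + θ • p.2))
  exact (hf.comp (measurable_fst.add (measurable_snd.const_smul (θ - 1)))).mul
    (hg.comp (measurable_fst.add (measurable_snd.const_smul θ)))

lemma core_estimate (hθ : θ ∈ Set.Icc (0:ℝ) 1) (hf : Measurable f) (hg : Measurable g)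
    (n : Fin d → ℤ) :
    ∫⁻ x in box d ((2:ℝ)^j) 0 1 n, Ij d j θ f g x ≤
      (∫⁻ x in box d ((2:ℝ)^j) (-2) 3 n, f x) * (∫⁻ x in box d ((2:ℝ)^j) (-2) 3 n, g x) := by
  set s : ℝ := (2:ℝ)^j with hsdef
  have hs : 0 < s := zpow_pos two_pos j
  set B : Set (Ed d) := {y : Ed d | ‖y‖ ≤ s} with hBdef
  have hB : MeasurableSet B := measurableSet_le measurable_norm measurable_const
  set Q := box d s 0 1 n with hQdef
  set Q3 := box d s (-1) 2 n with hQ3def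
  set Q5 := box d s (-2) 3 n with hQ5def
  have hQ : MeasurableSet Q := box_measurable s 0 1 n
  have hQ3 : MeasurableSet Q3 := box_measurable s (-1) 2 n
  have hQ5 : MeasurableSet Q5 := box_measurable s (-2) 3 n
  have hθ1 : |θ - 1| ≤ 1 := by
    rw [abs_le]; constructor <;> [linarith [hθ.1]; linarith [hθ.2]]
  have shift_bound : ∀ (c : ℝ), |c| ≤ 1 → ∀ y : Ed d, ‖y‖ ≤ s → ∀ i, |(c • y : Ed d) i| ≤ s := by
    intro c hc y hy i
    have : |(c • y : Ed d) i| = |c| * |y i| := by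
      simp [abs_mul]
    rw [this]
    calc |c| * |y i| ≤ 1 * ‖y‖ := by
          exact mul_le_mul hc (abs_coord_le y i) (abs_nonneg _) zero_le_one
    _ ≤ s := by rw [one_mul]; exact hy
  have swap1 : ∫⁻ x in Q, Ij d j θ f g x =
      ∫⁻ y in B, ∫⁻ x in Q, f (x + (θ - 1) • y) * g (x + θ • y) := by
    rw [show (∫⁻ x in Q, Ij d j θ f g x) =
      ∫⁻ x in Q, ∫⁻ y in B, f (x + (θ - 1) • y) * g (x + θ • y) from rfl]
    exact lintegral_lintegral_swap
      (((hf.comp (measurable_fst.add (measurable_snd.const_smul (θ - 1)))).mul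
        (hg.comp (measurable_fst.add (measurable_snd.const_smul θ)))).aemeasurable)
  have hQ35 : Q3 ⊆ Q5 := by
    intro x hx i
    obtain ⟨h1, h2⟩ := hx i
    push_cast at h1 h2 ⊢
    constructor <;> nlinarith [hs.le]
  have step2 : ∀ y ∈ B, (∫⁻ x in Q, f (x + (θ - 1) • y) * g (x + θ • y)) ≤
      ∫⁻ z, Q3.indicator 1 z * f z * g (z + y) := by
    intro y hy
    have hyB : ‖y‖ ≤ s := hy
    set H : Ed d → ℝ≥0∞ := fun z => Q.indicator 1 (z - (θ - 1) • y) * f z * g (z + y) with hH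
    have e1 : (∫⁻ x in Q, f (x + (θ - 1) • y) * g (x + θ • y))
        = ∫⁻ x, H (x + (θ - 1) • y) := by
      rw [← lintegral_indicator hQ]
      congr 1; funext x
      have harg : x + (θ - 1) • y + y = x + θ • y := by
        rw [sub_smul, one_smul]; abel
      rw [ind_mul, hH]
      simp only [add_sub_cancel_right, harg, mul_assoc]
    rw [e1, lintegral_add_right_eq_self]
    refine lintegral_mono fun z => ?_
    rw [hH]
    by_cases hz : z - (θ - 1) • y ∈ Q
    · have hz3 : z ∈ Q3 := by
        have hb : ∀ i, |z i - (z - (θ - 1) • y) i| ≤ s := by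
          intro i
          have : z i - (z - (θ - 1) • y) i = ((θ - 1) • y : Ed d) i := by
            simp [PiLp.sub_apply]
          rw [this]
          exact shift_bound (θ - 1) hθ1 y hyB i
        have := mem_box_shift hz hb
        simpa using this
      simp [Set.indicator_of_mem hz, Set.indicator_of_mem hz3]
    · simp [Set.indicator_of_notMem hz]
  have inner_bound : ∀ z ∈ Q3, (∫⁻ y in B, g (z + y)) ≤ ∫⁻ w in Q5, g w := by
    intro z hz3
    set K : Ed d → ℝ≥0∞ := fun w => B.indicator 1 (w - z) * g w with hK
    have e2 : (∫⁻ y in B, g (z + y)) = ∫⁻ y, K (y + z) := by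
      rw [← lintegral_indicator hB]
      congr 1; funext y
      rw [ind_mul, hK]
      simp only [add_sub_cancel_right]
      rw [add_comm z y]
    rw [e2, lintegral_add_right_eq_self]
    calc ∫⁻ w, K w ≤ ∫⁻ w, Q5.indicator g w := by
          refine lintegral_mono fun w => ?_
          by_cases hw : w - z ∈ B
          · have hw5 : w ∈ Q5 := by
              have hb : ∀ i, |w i - z i| ≤ s := by
                intro i
                have h' : |(w - z : Ed d) i| ≤ ‖(w - z : Ed d)‖ := abs_coord_le _ i
                simp only [PiLp.sub_apply] at h'
                exact le_trans h' hw
              have := mem_box_shift hz3 hb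
              simpa using this
            simp [hK, Set.indicator_of_mem hw, Set.indicator_of_mem hw5]
          · simp [hK, Set.indicator_of_notMem hw]
    _ = ∫⁻ w in Q5, g w := lintegral_indicator hQ5 g
  calc ∫⁻ x in Q, Ij d j θ f g x
      = ∫⁻ y in B, ∫⁻ x in Q, f (x + (θ - 1) • y) * g (x + θ • y) := swap1
    _ ≤ ∫⁻ y in B, ∫⁻ z, Q3.indicator 1 z * f z * g (z + y) := setLIntegral_mono' hB step2
    _ = ∫⁻ z, ∫⁻ y in B, Q3.indicator 1 z * f z * g (z + y) := by
        refine lintegral_lintegral_swap ?_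
        exact (((measurable_const.indicator hQ3).comp measurable_snd).mul
          (hf.comp measurable_snd)).mul
          (hg.comp (measurable_snd.add measurable_fst)) |>.aemeasurable
    _ = ∫⁻ z, Q3.indicator 1 z * f z * ∫⁻ y in B, g (z + y) := by
        congr 1; funext z
        exact lintegral_const_mul _ (hg.comp (measurable_id.const_add z))
    _ ≤ ∫⁻ z, Q3.indicator 1 z * f z * ∫⁻ w in Q5, g w := by
        refine lintegral_mono fun z => ?_
        by_cases hz3 : z ∈ Q3
        · exact mul_le_mul_right (inner_bound z hz3) _
        · simp [Set.indicator_of_notMem hz3]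
    _ = (∫⁻ z in Q3, f z) * ∫⁻ w in Q5, g w := by
        rw [lintegral_mul_const (f := fun z => Q3.indicator 1 z * f z) _ ((measurable_one.indicator hQ3).mul hf)]
        congr 1
        rw [← lintegral_indicator hQ3]
        congr 1; funext z
        exact (ind_mul Q3 f z).symm
    _ ≤ (∫⁻ z in Q5, f z) * ∫⁻ w in Q5, g w :=
        mul_le_mul_left (lintegral_mono_set hQ35) _

end Stmt5Aux

open Stmt5Aux

theorem stmt5 (d : ℕ) (j : ℤ) (θ : ℝ) (hθ : θ ∈ Set.Icc (0 : ℝ) 1)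
    (f g : EuclideanSpace ℝ (Fin d) → ℝ≥0∞)
    (hf : Measurable f) (hg : Measurable g)
    (hf1 : (∫⁻ x, f x) < ∞) (hg1 : (∫⁻ x, g x) < ∞) :
    (∫⁻ x, (Ij d j θ f g x) ^ ((1 : ℝ) / 2)) ^ (2 : ℕ) ≤
      (2 : ℝ≥0∞) ^ ((d : ℤ) * j) * (3 ^ d * 5 ^ (2 * d) : ℝ≥0∞) *
        (∫⁻ x, f x) * (∫⁻ x, g x) := by
  set s : ℝ := (2:ℝ)^j with hsdef
  have hs : 0 < s := zpow_pos two_pos j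
  have hImeas : Measurable (Ij d j θ f g) := measurable_Ij j θ f g hf hg
  set a : (Fin d → ℤ) → ℝ≥0∞ := fun n => ∫⁻ x in box d s (-2) 3 n, f x with ha
  set b : (Fin d → ℤ) → ℝ≥0∞ := fun n => ∫⁻ x in box d s (-2) 3 n, g x with hb
  set vQ : ℝ≥0∞ := (2:ℝ≥0∞) ^ ((d:ℤ)*j) with hvQ
  have hvol : ∀ n : Fin d → ℤ, volume (box d s 0 1 n) = vQ := by
    intro n
    rw [box_volume s 0 1 n]
    have h1 : (((1:ℤ) - 0 : ℤ):ℝ) * s = (2:ℝ)^j := by norm_num [hsdef]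
    rw [h1, ofReal_two_zpow j, two_zpow_pow d j]
  -- split over cubes
  have splitA : (∫⁻ x, Ij d j θ f g x ^ ((1:ℝ)/2))
      = ∑' n : Fin d → ℤ, ∫⁻ x in box d s 0 1 n, Ij d j θ f g x ^ ((1:ℝ)/2) := by
    rw [← setLIntegral_univ, ← box_cover hs,
      lintegral_iUnion (box_measurable s 0 1) (box_disjoint hs)]
  -- per-cube bound
  have bound : ∀ n : Fin d → ℤ, (∫⁻ x in box d s 0 1 n, Ij d j θ f g x ^ ((1:ℝ)/2)) ≤
      vQ ^ ((1:ℝ)/2) * ((a n) ^ ((1:ℝ)/2) * (b n) ^ ((1:ℝ)/2)) := by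
    intro n
    calc (∫⁻ x in box d s 0 1 n, Ij d j θ f g x ^ ((1:ℝ)/2))
        ≤ ((volume.restrict (box d s 0 1 n)) Set.univ) ^ ((1:ℝ)/2)
          * (∫⁻ x in box d s 0 1 n, Ij d j θ f g x) ^ ((1:ℝ)/2) :=
          lintegral_rpow_half_le _ _ hImeas.aemeasurable
    _ = vQ ^ ((1:ℝ)/2) * (∫⁻ x in box d s 0 1 n, Ij d j θ f g x) ^ ((1:ℝ)/2) := by
          rw [Measure.restrict_apply_univ, hvol n]
    _ ≤ vQ ^ ((1:ℝ)/2) * (a n * b n) ^ ((1:ℝ)/2) := by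
          gcongr
          exact core_estimate j θ f g hθ hf hg n
    _ = _ := by rw [ENNReal.mul_rpow_of_nonneg _ _ (by norm_num : (0:ℝ) ≤ 1/2)]
  -- counting overlap of the enlarged cubes
  have counting : ∀ (h : EuclideanSpace ℝ (Fin d) → ℝ≥0∞), Measurable h →
      (∑' n : Fin d → ℤ, ∫⁻ x in box d s (-2) 3 n, h x) = 5^d * ∫⁻ x, h x := by
    intro h hh
    have e : ∀ n : Fin d → ℤ, (∫⁻ x in box d s (-2) 3 n, h x)
        = ∫⁻ x, (box d s (-2) 3 n).indicator h x :=
      fun n => (lintegral_indicator (box_measurable s (-2) 3 n) h).symm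
    rw [tsum_congr e,
      ← lintegral_tsum (fun n => (hh.indicator (box_measurable s (-2) 3 n)).aemeasurable)]
    have e2 : ∀ x, (∑' n : Fin d → ℤ, (box d s (-2) 3 n).indicator h x) = 5^d * h x := by
      intro x
      have e3 : ∀ n : Fin d → ℤ, (box d s (-2) 3 n).indicator h x
          = (box d s (-2) 3 n).indicator 1 x * h x := fun n => ind_mul _ h x
      rw [tsum_congr e3, ENNReal.tsum_mul_right]
      have e4 : (∑' n : Fin d → ℤ, (box d s (-2) 3 n).indicator (1 : EuclideanSpace ℝ (Fin d) → ℝ≥0∞) x)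
          = (((3 - (-2) : ℤ).toNat : ℝ≥0∞)) ^ d := box_count hs (-2) 3 x
      rw [e4]
      norm_cast
    rw [lintegral_congr e2, lintegral_const_mul _ hh]
  -- total bound
  have total : (∫⁻ x, Ij d j θ f g x ^ ((1:ℝ)/2)) ≤
      (vQ * (5^d * ∫⁻ x, f x) * (5^d * ∫⁻ x, g x)) ^ ((1:ℝ)/2) := by
    rw [splitA]
    calc (∑' n : Fin d → ℤ, ∫⁻ x in box d s 0 1 n, Ij d j θ f g x ^ ((1:ℝ)/2))
        ≤ ∑' n : Fin d → ℤ, vQ ^ ((1:ℝ)/2) * ((a n) ^ ((1:ℝ)/2) * (b n) ^ ((1:ℝ)/2)) :=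
          ENNReal.tsum_le_tsum bound
      _ = vQ ^ ((1:ℝ)/2) * ∑' n : Fin d → ℤ, (a n) ^ ((1:ℝ)/2) * (b n) ^ ((1:ℝ)/2) :=
          ENNReal.tsum_mul_left
      _ ≤ vQ ^ ((1:ℝ)/2) * ((∑' n, a n) ^ ((1:ℝ)/2) * (∑' n, b n) ^ ((1:ℝ)/2)) :=
          mul_le_mul_right (tsum_cauchy_schwarz a b) _
      _ = _ := by
          rw [ha, hb, counting f hf, counting g hg]
          conv_rhs => rw [ENNReal.mul_rpow_of_nonneg _ _ (by norm_num : (0:ℝ) ≤ 1/2),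
            ENNReal.mul_rpow_of_nonneg _ _ (by norm_num : (0:ℝ) ≤ 1/2)]
          rw [mul_assoc]
  -- conclude
  calc (∫⁻ x, (Ij d j θ f g x) ^ ((1 : ℝ) / 2)) ^ (2 : ℕ)
      ≤ ((vQ * (5^d * ∫⁻ x, f x) * (5^d * ∫⁻ x, g x)) ^ ((1:ℝ)/2)) ^ (2:ℕ) :=
        pow_le_pow_left' total 2
    _ = vQ * (5^d * ∫⁻ x, f x) * (5^d * ∫⁻ x, g x) := by
        rw [← ENNReal.rpow_natCast, ← ENNReal.rpow_mul]; norm_num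
    _ = vQ * (5^d * 5^d) * (∫⁻ x, f x) * (∫⁻ x, g x) := by ring
    _ ≤ vQ * (3 ^ d * 5 ^ (2 * d)) * (∫⁻ x, f x) * (∫⁻ x, g x) := by
        have h55 : (5:ℝ≥0∞)^d * 5^d ≤ 3^d * 5^(2*d) := by
          calc (5:ℝ≥0∞)^d * 5^d = 5^(2*d) := by rw [← pow_add, two_mul]
          _ ≤ 3 ^ d * 5 ^ (2*d) :=
            le_mul_of_one_le_left' (one_le_pow_of_one_le' (by norm_num : (1:ℝ≥0∞) ≤ 3) d)
        exact mul_le_mul_left (mul_le_mul_left (mul_le_mul_right h55 vQ) _) _
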